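/- Let k ≥ 2 and let h, h' : 𝔽₂ⁿ → ℤ_{2^{k−1}} be two generalized Boolean functions. Suppose that for every u ∈ 𝔽₂ⁿ: |H_h^{(2^{k−1})}(u)|² = 2ⁿ, |H_{h'}^{(2^{k−1})}(u)|² = 2ⁿ, and Im( conj(H_h^{(2^{k−1})}(u)) · H_{h'}^{(2^{k−1})}(u) ) = 0. Then for any g : 𝔽₂ⁿ → 𝔽₂ with h' = h + 2^{k−2}g, the function f(x) = g(x) + 2h(x) : 𝔽₂ⁿ → ℤ_{2^k} satisfies |H_f^{(2^k)}(u)|² = 2ⁿ for all u, i.e., f is gbent. -/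

import Mathlib

open Finset Complex

/-- Standard inner product on `𝔽₂ⁿ`. -/
def ip {n : ℕ} (u x : Fin n → ZMod 2) : ZMod 2 := ∑ i, u i * x i

/-- Walsh–Hadamard transform of a Boolean function. -/
noncomputable def WHT {n : ℕ} (g : (Fin n → ZMod 2) → ZMod 2) (u : Fin n → ZMod 2) : ℂ :=
  ∑ x : Fin n → ZMod 2, (-1 : ℂ) ^ ((g x + ip u x).val)

/-- Generalized Walsh–Hadamard transform of `f : 𝔽₂ⁿ → ℤ_q`. -/
noncomputable def GWT {n : ℕ} (q : ℕ) [NeZero q] (f : (Fin n → ZMod 2) → ZMod q)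
    (u : Fin n → ZMod 2) : ℂ :=
  ∑ x : Fin n → ZMod 2,
    Complex.exp (2 * Real.pi * Complex.I * ((f x).val : ℂ) / (q : ℂ)) *
      (-1 : ℂ) ^ ((ip u x).val)

/-- `exp(2πi t / m)` depends only on `t mod m`. -/
lemma exp_mod (m : ℕ) (hm : m ≠ 0) (t : ℕ) :
    Complex.exp (2 * Real.pi * Complex.I * ((t % m : ℕ) : ℂ) / m) =
      Complex.exp (2 * Real.pi * Complex.I * (t : ℂ) / m) := by
  have hmC : (m : ℂ) ≠ 0 := Nat.cast_ne_zero.mpr hm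
  have ht : (t : ℂ) = (m : ℂ) * ((t / m : ℕ) : ℂ) + ((t % m : ℕ) : ℂ) := by
    exact_mod_cast congrArg (Nat.cast : ℕ → ℂ) (Nat.div_add_mod t m).symm
  have key : 2 * (Real.pi : ℂ) * Complex.I * (t : ℂ) / m =
      2 * Real.pi * Complex.I * ((t % m : ℕ) : ℂ) / m +
        ((t / m : ℕ) : ℂ) * (2 * Real.pi * Complex.I) := by
    rw [ht]; field_simp; ring
  have hone : Complex.exp (((t / m : ℕ) : ℂ) * (2 * Real.pi * Complex.I)) = 1 := by
    have h1 : (((t / m : ℕ) : ℤ) : ℂ) = ((t / m : ℕ) : ℂ) := by push_cast; rfl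
    rw [← h1, Complex.exp_int_mul_two_pi_mul_I]
  rw [key, Complex.exp_add, hone, mul_one]

lemma exp_natCast (m : ℕ) [NeZero m] (t : ℕ) :
    Complex.exp (2 * Real.pi * Complex.I * (((t : ZMod m)).val : ℂ) / m) =
      Complex.exp (2 * Real.pi * Complex.I * (t : ℂ) / m) := by
  rw [ZMod.val_natCast]
  exact exp_mod m (NeZero.ne m) t

theorem gbent_of_components (n k : ℕ) (hk : 2 ≤ k)
    (h h' : (Fin n → ZMod 2) → ZMod (2 ^ (k - 1))) (g : (Fin n → ZMod 2) → ZMod 2)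
    (f : (Fin n → ZMod 2) → ZMod (2 ^ k))
    (H1 : ∀ u, ‖GWT (2 ^ (k - 1)) h u‖ ^ 2 = 2 ^ n)
    (H2 : ∀ u, ‖GWT (2 ^ (k - 1)) h' u‖ ^ 2 = 2 ^ n)
    (H3 : ∀ u, ((starRingEnd ℂ) (GWT (2 ^ (k - 1)) h u) * GWT (2 ^ (k - 1)) h' u).im = 0)
    (hh' : ∀ x, h' x = h x + (2 ^ (k - 2) : ZMod (2 ^ (k - 1))) * ((g x).val : ZMod (2 ^ (k - 1))))
    (hf : ∀ x, f x = ((g x).val : ZMod (2 ^ k)) + 2 * ((h x).val : ZMod (2 ^ k))) :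
    ∀ u, ‖GWT (2 ^ k) f u‖ ^ 2 = 2 ^ n := by
  intro u
  have hNq : (2 : ℕ) ^ k = 2 * 2 ^ (k - 1) := by
    rw [← pow_succ']; congr 1; omega
  have hN2 : (2 : ℕ) ^ (k - 1) = 2 * 2 ^ (k - 2) := by
    rw [← pow_succ']; congr 1; omega
  have hNC : (2 : ℂ) ^ (k - 1) ≠ 0 := pow_ne_zero _ two_ne_zero
  have hN2C : (2 : ℂ) ^ (k - 2) ≠ 0 := pow_ne_zero _ two_ne_zero
  have hqC : (2 : ℂ) ^ k ≠ 0 := pow_ne_zero _ two_ne_zero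
  set ζ : ℂ := Complex.exp (((2 * Real.pi / (2 ^ k : ℕ) : ℝ) : ℂ) * Complex.I) with hζdef
  have hgval : ∀ x, g x = 0 ∨ g x = 1 := by
    intro x
    have h2 : (g x).val < 2 := ZMod.val_lt _
    have : (g x).val = 0 ∨ (g x).val = 1 := by omega
    rcases this with h0 | h1
    · left; rw [← ZMod.natCast_rightInverse (g x), h0]; simp
    · right; rw [← ZMod.natCast_rightInverse (g x), h1]; simp
  have hval1 : (1 : ZMod 2).val = 1 := rfl
  -- Step A : exp for f
  have hEf : ∀ x, Complex.exp (2 * Real.pi * Complex.I * ((f x).val : ℂ) / ((2 ^ k : ℕ) : ℂ)) =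
      (if g x = 0 then 1 else ζ) *
        Complex.exp (2 * Real.pi * Complex.I * ((h x).val : ℂ) / ((2 ^ (k - 1) : ℕ) : ℂ)) := by
    intro x
    have h1 : f x = (((g x).val + 2 * (h x).val : ℕ) : ZMod (2 ^ k)) := by
      rw [hf x]; push_cast; ring
    rw [h1, exp_natCast]
    have h2 : 2 * (Real.pi : ℂ) * Complex.I * (((g x).val + 2 * (h x).val : ℕ) : ℂ) /
        ((2 ^ k : ℕ) : ℂ) =
        2 * Real.pi * Complex.I * ((g x).val : ℂ) / ((2 ^ k : ℕ) : ℂ) +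
          2 * Real.pi * Complex.I * ((h x).val : ℂ) / ((2 ^ (k - 1) : ℕ) : ℂ) := by
      have hc : ((2 ^ k : ℕ) : ℂ) = 2 * (2 : ℂ) ^ (k - 1) := by
        rw [hNq]; push_cast; ring
      rw [hc]; push_cast; field_simp
    rw [h2, Complex.exp_add]
    congr 1
    rcases hgval x with h0 | h1'
    · rw [if_pos h0, h0]
      norm_num [ZMod.val_zero]
    · rw [if_neg (by simp [h1']), h1', hval1, hζdef]
      congr 1
      push_cast
      field_simp
  -- Step B : exp for h'
  have hEh' : ∀ x, Complex.exp (2 * Real.pi * Complex.I * ((h' x).val : ℂ) /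
      ((2 ^ (k - 1) : ℕ) : ℂ)) =
      (if g x = 0 then 1 else -1) *
        Complex.exp (2 * Real.pi * Complex.I * ((h x).val : ℂ) / ((2 ^ (k - 1) : ℕ) : ℂ)) := by
    intro x
    rcases hgval x with h0 | h1'
    · rw [if_pos h0, one_mul, hh' x, h0]
      simp
    · rw [if_neg (by simp [h1'])]
      have hv1 : ((g x).val : ZMod (2 ^ (k - 1))) = 1 := by
        rw [h1', hval1, Nat.cast_one]
      have hrw : h' x = (((h x).val + 2 ^ (k - 2) : ℕ) : ZMod (2 ^ (k - 1))) := by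
        rw [hh' x, hv1, mul_one]
        push_cast
        rw [ZMod.natCast_rightInverse (h x)]
      rw [hrw, exp_natCast]
      have h2 : 2 * (Real.pi : ℂ) * Complex.I * (((h x).val + 2 ^ (k - 2) : ℕ) : ℂ) /
          ((2 ^ (k - 1) : ℕ) : ℂ) =
          (Real.pi : ℂ) * Complex.I +
            2 * Real.pi * Complex.I * ((h x).val : ℂ) / ((2 ^ (k - 1) : ℕ) : ℂ) := by
        have hc : ((2 ^ (k - 1) : ℕ) : ℂ) = 2 * (2 : ℂ) ^ (k - 2) := by
          rw [hN2]; push_cast; ring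
        rw [hc]; push_cast; field_simp; ring
      rw [h2, Complex.exp_add, Complex.exp_pi_mul_I]
  -- Step C : 2 * GWT f = (1+ζ) X + (1-ζ) Y
  set X := GWT (2 ^ (k - 1)) h u with hX
  set Y := GWT (2 ^ (k - 1)) h' u with hY
  have hC : 2 * GWT (2 ^ k) f u = (1 + ζ) * X + (1 - ζ) * Y := by
    rw [hX, hY]
    unfold GWT
    rw [Finset.mul_sum, Finset.mul_sum, Finset.mul_sum, ← Finset.sum_add_distrib]
    apply Finset.sum_congr rfl
    intro x _
    rw [hEf x, hEh' x]
    by_cases hg0 : g x = 0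
    · rw [if_pos hg0, if_pos hg0]; ring
    · rw [if_neg hg0, if_neg hg0]; ring
  -- Step D : algebra
  have habsζ : ‖ζ‖ = 1 := Complex.norm_exp_ofReal_mul_I _
  have hζ1 : ζ.re * ζ.re + ζ.im * ζ.im = 1 := by
    have hs := Complex.sq_norm ζ
    rw [habsζ, Complex.normSq_apply] at hs
    linarith [hs]
  have hXn : X.re * X.re + X.im * X.im = 2 ^ n := by
    have hs := H1 u
    rw [← hX, Complex.sq_norm, Complex.normSq_apply] at hs
    exact hs
  have hYn : Y.re * Y.re + Y.im * Y.im = 2 ^ n := by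
    have hs := H2 u
    rw [← hY, Complex.sq_norm, Complex.normSq_apply] at hs
    exact hs
  have hcross : X.re * Y.im - X.im * Y.re = 0 := by
    have hs := H3 u
    rw [← hX, ← hY] at hs
    simp only [Complex.mul_im, Complex.conj_re, Complex.conj_im] at hs
    linarith [hs]
  have hmain : Complex.normSq (2 * GWT (2 ^ k) f u) = 4 * 2 ^ n := by
    rw [hC]
    simp only [Complex.normSq_apply, Complex.add_re, Complex.add_im, Complex.mul_re,
      Complex.mul_im, Complex.one_re, Complex.one_im, Complex.sub_re, Complex.sub_im]
    linear_combination (1 + 2*ζ.re + ζ.re^2 + ζ.im^2) * hXn +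
      (1 - 2*ζ.re + ζ.re^2 + ζ.im^2) * hYn + 4*ζ.im * hcross +
      ((2:ℝ)^n * 2 - 2*(X.re*Y.re + X.im*Y.im)) * hζ1
  have h4 : Complex.normSq (2 * GWT (2 ^ k) f u) = 4 * Complex.normSq (GWT (2 ^ k) f u) := by
    rw [Complex.normSq_mul]; norm_num
  rw [Complex.sq_norm]
  rw [h4] at hmain
  linarith [hmain]
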